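/- Let G be an abelian group and T a pure subgroup of the torsion subgroup Tor(G). If T is a direct sum of a divisible group and a group of bounded exponent, then T is a direct summand of G. -/

import Mathlib

open AddSubgroup

section Aux
universe u
variable {H : Type u} [AddCommGroup H]

def PureSub (S : AddSubgroup H) : Prop :=
  ∀ (m : ℕ) ⦃x : H⦄, x ∈ S → (∃ h : H, m • h = x) → ∃ s ∈ S, m • s = x


theorem baer_of_div (D : AddSubgroup H)
    (hdiv : ∀ x ∈ D, ∀ n : ℕ, 0 < n → ∃ y ∈ D, n • y = x) : Module.Baer ℤ ↥D := by
  intro I g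
  obtain ⟨a, ha⟩ := (IsPrincipalIdealRing.principal I).principal
  rw [Ideal.submodule_span_eq] at ha
  by_cases h0 : a = 0
  · subst h0
    refine ⟨0, fun x mem => ?_⟩
    have hx : x = 0 := by simpa [ha, Ideal.mem_span_singleton] using mem
    subst hx
    have : (⟨(0:ℤ), mem⟩ : I) = 0 := by ext; rfl
    simp [this]
  · have hmem : a ∈ I := by rw [ha]; exact Ideal.subset_span rfl
    set q : ↥D := g ⟨a, hmem⟩ with hq
    obtain ⟨y, hyD, hy⟩ := hdiv q.1 q.2 a.natAbs (Int.natAbs_pos.mpr h0)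
    set y' : ↥D := ⟨y, hyD⟩ with hy'
    set y₀ : ↥D := (Int.sign a) • y' with hy₀
    have key : a • y₀ = q := by
      have h1 : a • y₀ = (a * Int.sign a) • y' := by rw [hy₀, smul_smul]
      have h2 : a * Int.sign a = (a.natAbs : ℤ) := Int.mul_sign_self a
      have h3 : ((a.natAbs : ℤ)) • y' = q := by
        rw [natCast_zsmul]
        apply Subtype.ext
        simpa using hy
      rw [h1, h2, h3]
    refine ⟨LinearMap.toSpanSingleton ℤ ↥D y₀, fun x mem => ?_⟩
    have : a ∣ x := by rwa [ha, Ideal.mem_span_singleton] at mem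
    obtain ⟨c, rfl⟩ := this
    have : (⟨a * c, mem⟩ : I) = c • ⟨a, hmem⟩ := by ext; simp [mul_comm]
    rw [this, map_smul, LinearMap.toSpanSingleton_apply]
    rw [mul_comm, mul_smul, key]

theorem div_split (D : AddSubgroup H)
    (hdiv : ∀ x ∈ D, ∀ n : ℕ, 0 < n → ∃ y ∈ D, n • y = x) :
    ∃ r : H →ₗ[ℤ] ↥D, ∀ d : ↥D, r d = d := by
  have inj : Module.Injective ℤ ↥D := (baer_of_div D hdiv).injective
  obtain ⟨r, hr⟩ := inj.out (D.subtype.toIntLinearMap) Subtype.val_injective LinearMap.id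
  exact ⟨r, fun d => hr d⟩


theorem bp_primepow (p : ℕ) (hp : p.Prime) :
    ∀ (k : ℕ) (H : Type u) [AddCommGroup H] (S : AddSubgroup H), PureSub S →
      (∀ h : H, p ^ k • h = 0) → ∃ K : AddSubgroup H, IsCompl S K := by
  intro k
  induction k with
  | zero =>
    intro H _ S _ hbd
    have hz : ∀ h : H, h = 0 := fun h => by simpa using hbd h
    refine ⟨⊤, ?_, codisjoint_top_right⟩
    exact (AddSubgroup.disjoint_def).mpr fun {x} _ _ => hz x
  | succ k ih =>
    intro H _ S hpure hbd
    set φ : H →+ H := DistribMulAction.toAddMonoidHom H (p:ℤ) with hφ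
    set pH : AddSubgroup H := AddSubgroup.map φ ⊤ with hpH
    have mem_pH : ∀ x : H, x ∈ pH ↔ ∃ h : H, p • h = x := by
      intro x
      constructor
      · rintro ⟨h, -, rfl⟩
        exact ⟨h, (natCast_zsmul h p).symm⟩
      · rintro ⟨h, rfl⟩
        exact ⟨h, trivial, natCast_zsmul h p⟩
    set S₂ : AddSubgroup ↥pH := S.addSubgroupOf pH with hS₂
    have hpure₂ : PureSub S₂ := by
      intro m x hx ⟨h, hmh⟩
      obtain ⟨h', hh'⟩ := (mem_pH _).mp h.2
      have hx1 : (x : H) = (m * p) • h' := by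
        rw [mul_smul, hh', ← hmh]; rfl
      obtain ⟨s, hsS, hs⟩ := hpure (m * p) (mem_addSubgroupOf.mp hx) ⟨h', hx1.symm⟩
      rw [mul_smul] at hs
      have hmem : p • s ∈ pH := (mem_pH _).mpr ⟨s, rfl⟩
      refine ⟨⟨p • s, hmem⟩, mem_addSubgroupOf.mpr (S.nsmul_mem hsS p), ?_⟩
      apply Subtype.ext
      simpa using hs
    have hbd₂ : ∀ x : ↥pH, p ^ k • x = 0 := by
      intro x
      obtain ⟨h, hh⟩ := (mem_pH _).mp x.2
      apply Subtype.ext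
      have : p ^ k • (x : H) = p ^ (k+1) • h := by
        rw [← hh, ← mul_smul, pow_succ]
      simpa [this] using hbd h
    obtain ⟨C₂, hC₂⟩ := ih ↥pH S₂ hpure₂ hbd₂
    set C : AddSubgroup H := C₂.map pH.subtype with hC
    have hSC : Disjoint S C := by
      rw [AddSubgroup.disjoint_def]
      intro x hxS hxC
      obtain ⟨c₂, hc₂, hc₂x⟩ := hxC
      have hmem2 : c₂ ∈ S₂ ⊓ C₂ := ⟨mem_addSubgroupOf.mpr (by rw [← hc₂x] at hxS; exact hxS), hc₂⟩
      rw [hC₂.inf_eq_bot, AddSubgroup.mem_bot] at hmem2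
      rw [← hc₂x, hmem2]
      exact map_zero _
    set fam : Set (AddSubgroup H) := {K | C ≤ K ∧ Disjoint S K} with hfam
    obtain ⟨K, -, hKmem, hKmax⟩ := zorn_le_nonempty₀ fam (by
      intro c hc hchain y hy
      refine ⟨sSup c, ⟨le_trans (hc hy).1 (le_sSup hy), ?_⟩, fun z hz => le_sSup hz⟩
      rw [AddSubgroup.disjoint_def]
      intro x hxS hxsup
      obtain ⟨K', hK'c, hxK'⟩ := (mem_sSup_of_directedOn ⟨y, hy⟩ hchain.directedOn).mp hxsup
      exact AddSubgroup.disjoint_def.mp (hc hK'c).2 hxS hxK') C ⟨le_refl C, hSC⟩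
    refine ⟨K, hKmem.2, ?_⟩
    rw [codisjoint_iff]
    by_contra htop
    obtain ⟨g, hg⟩ : ∃ g : H, g ∉ S ⊔ K := by
      by_contra hall
      push_neg at hall
      exact htop ((AddSubgroup.eq_top_iff' _).mpr hall)
    set Z : AddSubgroup ℤ := AddSubgroup.comap (zmultiplesHom H g) (S ⊔ K) with hZ
    have memZ : ∀ z : ℤ, z ∈ Z ↔ z • g ∈ S ⊔ K := fun z => Iff.rfl
    obtain ⟨a, haZ⟩ := Int.subgroup_cyclic Z
    have hdvd_of : ∀ b : ℤ, b ∈ Z → a ∣ b := by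
      intro b hb
      rw [haZ] at hb
      obtain ⟨n, hn⟩ := AddSubgroup.mem_closure_singleton.mp hb
      exact ⟨n, by rw [← hn, zsmul_eq_mul, Int.cast_id, mul_comm]⟩
    have hpkZ : ((p:ℤ))^(k+1) ∈ Z := by
      rw [memZ]
      have : ((p:ℤ))^(k+1) • g = (p^(k+1) : ℕ) • g := by
        rw [← natCast_zsmul g (p^(k+1))]
        push_cast
        ring_nf
      rw [this, hbd g]
      exact zero_mem _
    have h1Z : (1:ℤ) ∉ Z := fun h => hg (by simpa using (memZ 1).mp h)
    have haa : a ∈ Z := haZ ▸ AddSubgroup.subset_closure rfl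
    have hadvd : a ∣ ((p:ℤ))^(k+1) := hdvd_of _ hpkZ
    have hna : a.natAbs ∣ p^(k+1) := by
      have h2 := Int.natAbs_dvd_natAbs.mpr hadvd
      rwa [Int.natAbs_pow, Int.natAbs_natCast] at h2
    obtain ⟨j, hjle, hja⟩ := (Nat.dvd_prime_pow hp).mp hna
    have hj0 : j ≠ 0 := by
      intro h0
      rw [h0, pow_zero] at hja
      refine h1Z ?_
      rcases Int.natAbs_eq a with h | h
      · have ha1 : a = 1 := by rw [h, hja]; norm_num
        rwa [ha1] at haa
      · have ha1 : a = -1 := by rw [h, hja]; norm_num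
        rw [ha1] at haa
        simpa using Z.neg_mem haa
    set g₁ : H := p^(j-1) • g with hg₁
    have hg₁M : g₁ ∉ S ⊔ K := by
      intro hmem
      have : ((p^(j-1) : ℕ) : ℤ) ∈ Z := by
        rw [memZ, natCast_zsmul]
        exact hmem
      have hdvd : a ∣ ((p^(j-1):ℕ):ℤ) := hdvd_of _ this
      have hdvd2 : p^j ∣ p^(j-1) := by
        have h3 := Int.natAbs_dvd_natAbs.mpr hdvd
        rwa [Int.natAbs_natCast, hja] at h3
      have hle := (Nat.pow_dvd_pow_iff_le_right hp.one_lt).mp hdvd2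
      omega
    have hpg₁ : p • g₁ ∈ S ⊔ K := by
      have h1 : p • g₁ = (p^j : ℕ) • g := by
        have hj : j - 1 + 1 = j := Nat.succ_pred_eq_of_pos (Nat.pos_of_ne_zero hj0)
        rw [hg₁, ← mul_smul, ← pow_succ', hj]
      have h2 : ((p^j : ℕ) : ℤ) • g ∈ S ⊔ K := by
        rcases Int.natAbs_eq a with h | h
        · have : ((p^j:ℕ):ℤ) = a := by rw [h, hja]
          rw [this]
          exact (memZ a).mp haa
        · have : ((p^j:ℕ):ℤ) = -a := by rw [h, hja]; simp
          rw [this, neg_zsmul]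
          exact (S ⊔ K).neg_mem ((memZ a).mp haa)
      rw [h1, ← natCast_zsmul]
      exact h2
    -- decompose p•g₁ inside pH as s₂ + c₂
    have hx₂mem : p • g₁ ∈ pH := (mem_pH _).mpr ⟨g₁, rfl⟩
    have htop₂ : S₂ ⊔ C₂ = ⊤ := hC₂.sup_eq_top
    have : (⟨p • g₁, hx₂mem⟩ : ↥pH) ∈ S₂ ⊔ C₂ := htop₂ ▸ AddSubgroup.mem_top _
    obtain ⟨s₂, hs₂, c₂, hc₂, hsum₂⟩ := AddSubgroup.mem_sup.mp this
    have hsum₂' : (s₂ : H) + (c₂ : H) = p • g₁ := congrArg Subtype.val hsum₂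
    have hs₂S : (s₂ : H) ∈ S := mem_addSubgroupOf.mp hs₂
    obtain ⟨h', hh'⟩ := (mem_pH _).mp s₂.2
    obtain ⟨s₁, hs₁S, hs₁⟩ := hpure p hs₂S ⟨h', hh'⟩
    set g₂ : H := g₁ - s₁ with hg₂
    have hpg₂K : p • g₂ = (c₂ : ↥pH) := by
      rw [hg₂, smul_sub, hs₁, ← hsum₂']
      abel
    have hc₂K : ((c₂ : ↥pH) : H) ∈ K := by
      have : ((c₂ : ↥pH) : H) ∈ C := ⟨c₂, hc₂, rfl⟩
      exact hKmem.1 this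
    have hpg₂K' : p • g₂ ∈ K := by rw [hpg₂K]; exact hc₂K
    have hg₂M : g₂ ∉ S ⊔ K := by
      intro hmem
      exact hg₁M (by
        have : g₁ = g₂ + s₁ := by rw [hg₂]; abel
        rw [this]
        exact AddSubgroup.add_mem _ hmem (AddSubgroup.mem_sup_left hs₁S))
    set K' : AddSubgroup H := K ⊔ zmultiples g₂ with hK'
    have hKK' : K ≤ K' := le_sup_left
    have hg₂K' : g₂ ∈ K' := AddSubgroup.mem_sup_right (mem_zmultiples g₂)
    have hnd : ¬ Disjoint S K' := by
      intro hdisj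
      have hK'mem : K' ∈ fam := ⟨le_trans hKmem.1 hKK', hdisj⟩
      have : K' ≤ K := hKmax hK'mem hKK'
      exact hg₂M (AddSubgroup.mem_sup_right (this hg₂K'))
    rw [AddSubgroup.disjoint_def] at hnd
    push_neg at hnd
    obtain ⟨x, hxS, hxK', hx0⟩ := hnd
    obtain ⟨k₁, hk₁, w, hw, hkw⟩ := AddSubgroup.mem_sup.mp hxK'
    obtain ⟨z, hz⟩ := mem_zmultiples_iff.mp hw
    by_cases hpz : (p:ℤ) ∣ z
    · obtain ⟨z', rfl⟩ := hpz
      have hwK : w ∈ K := by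
        rw [← hz, mul_comm, mul_smul]
        have : (p:ℤ) • g₂ = p • g₂ := natCast_zsmul g₂ p
        rw [this]
        exact K.zsmul_mem hpg₂K' z'
      have hxK : x ∈ K := by rw [← hkw]; exact K.add_mem hk₁ hwK
      exact hx0 (AddSubgroup.disjoint_def.mp hKmem.2 hxS hxK)
    · have hcop : IsCoprime (p:ℤ) z := by
        rw [Int.isCoprime_iff_gcd_eq_one]
        have : ¬ (p ∣ z.natAbs) := by
          intro hd
          exact hpz (Int.dvd_natAbs.mp (Int.natCast_dvd_natCast.mpr hd))
        have hcop' := (Nat.Prime.coprime_iff_not_dvd hp).mpr this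
        simpa [Int.gcd] using hcop'
      obtain ⟨u, v, huv⟩ := hcop
      have hg₂M' : g₂ ∈ S ⊔ K := by
        have h1 : g₂ = (u * p + v * z) • g₂ := by rw [huv, one_smul]
        have h2 : (u * p + v * z) • g₂ = u • ((p:ℤ) • g₂) + v • (z • g₂) := by
          rw [add_smul, mul_smul, mul_smul]
        have h3 : (p:ℤ) • g₂ ∈ S ⊔ K := by
          rw [natCast_zsmul]
          exact AddSubgroup.mem_sup_right hpg₂K'
        have h4 : z • g₂ ∈ S ⊔ K := by
          have hw' : w = x - k₁ := by rw [← hkw]; abel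
          rw [hz, hw']
          exact AddSubgroup.sub_mem _ (AddSubgroup.mem_sup_left hxS) (AddSubgroup.mem_sup_right hk₁)
        rw [h1, h2]
        exact AddSubgroup.add_mem _ ((S ⊔ K).zsmul_mem h3 u) ((S ⊔ K).zsmul_mem h4 v)
      exact hg₂M hg₂M'
theorem bp_bdd : ∀ (n : ℕ), 0 < n → ∀ (H : Type u) [AddCommGroup H] (S : AddSubgroup H),
    PureSub S → (∀ h : H, n • h = 0) → ∃ K : AddSubgroup H, IsCompl S K := by
  intro n
  induction n using Nat.strong_induction_on with
  | _ n ih =>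
  intro hn H _ S hpure hbd
  by_cases h1 : n = 1
  · subst h1
    have hz : ∀ h : H, h = 0 := fun h => by simpa using hbd h
    exact ⟨⊤, (AddSubgroup.disjoint_def).mpr fun {x} _ _ => hz x, codisjoint_top_right⟩
  have h2 : 2 ≤ n := by omega
  set p : ℕ := n.minFac with hpdef
  have hp : p.Prime := Nat.minFac_prime h1
  set v : ℕ := n.factorization p with hvdef
  set a : ℕ := p ^ v with hadef
  set b : ℕ := n / a with hbdef
  have hab : a * b = n := Nat.ordProj_mul_ordCompl_eq_self n p
  have hcop : Nat.Coprime a b :=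
    Nat.Coprime.pow_left _ (Nat.coprime_ordCompl hp (by omega))
  by_cases hb1 : b = 1
  · have hna : n = p ^ v := by rw [← hab, hb1, mul_one]
    exact bp_primepow p hp v H S hpure (fun h => by rw [← hna]; exact hbd h)
  · have hapos : 0 < a := pow_pos hp.pos v
    have hbpos : 0 < b := by
      rcases Nat.eq_zero_or_pos b with h | h
      · rw [h, mul_zero] at hab; omega
      · exact h
    have ha1 : 1 < a := by
      have hv : 0 < v := hp.factorization_pos_of_dvd (by omega) (Nat.minFac_dvd n)
      calc 1 < p := hp.one_lt
      _ ≤ p ^ v := Nat.le_self_pow (by omega) p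
    have halt : a < n := by
      rw [← hab]
      exact Nat.lt_mul_iff_one_lt_right hapos |>.mpr (by omega)
    have hblt : b < n := by
      rw [← hab]
      exact Nat.lt_mul_iff_one_lt_left hbpos |>.mpr ha1
    set α : ℤ := Nat.gcdA a b with hα
    set β : ℤ := Nat.gcdB a b with hβ
    have hbez : (a:ℤ) * α + (b:ℤ) * β = 1 := by
      have := Nat.gcd_eq_gcd_ab a b
      rw [hcop] at this
      exact_mod_cast this.symm
    set A : AddSubgroup H := (DistribMulAction.toAddMonoidHom H (a:ℤ)).ker with hA
    set B : AddSubgroup H := (DistribMulAction.toAddMonoidHom H (b:ℤ)).ker with hB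
    have memA : ∀ x : H, x ∈ A ↔ (a:ℤ) • x = 0 := fun x => Iff.rfl
    have memB : ∀ x : H, x ∈ B ↔ (b:ℤ) • x = 0 := fun x => Iff.rfl
    have nbd : ∀ h : H, ((a:ℤ) * (b:ℤ)) • h = 0 := by
      intro h
      have : ((a:ℤ) * (b:ℤ)) = ((n:ℕ) : ℤ) := by exact_mod_cast congrArg (Nat.cast (R := ℤ)) hab
      rw [this, natCast_zsmul]
      exact hbd h
    have decompA : ∀ h : H, ((b:ℤ) * β) • h ∈ A := by
      intro h
      rw [memA, smul_smul]
      have : (a:ℤ) * ((b:ℤ) * β) = β * ((a:ℤ) * (b:ℤ)) := by ring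
      rw [this, mul_smul, nbd h, smul_zero]
    have decompB : ∀ h : H, ((a:ℤ) * α) • h ∈ B := by
      intro h
      rw [memB, smul_smul]
      have : (b:ℤ) * ((a:ℤ) * α) = α * ((a:ℤ) * (b:ℤ)) := by ring
      rw [this, mul_smul, nbd h, smul_zero]
    have decompSum : ∀ h : H, ((b:ℤ) * β) • h + ((a:ℤ) * α) • h = h := by
      intro h
      rw [← add_smul]
      have : (b:ℤ) * β + (a:ℤ) * α = 1 := by rw [← hbez]; ring
      rw [this, one_smul]
    have projA : ∀ x : H, x ∈ A → ((b:ℤ) * β) • x = x := by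
      intro x hx
      have h2' : ((a:ℤ) * α) • x = α • ((a:ℤ) • x) := by rw [smul_smul, mul_comm]
      rw [(memA x).mp hx, smul_zero] at h2'
      have := decompSum x
      rw [h2', add_zero] at this
      exact this
    have projB : ∀ x : H, x ∈ B → ((a:ℤ) * α) • x = x := by
      intro x hx
      have h2' : ((b:ℤ) * β) • x = β • ((b:ℤ) • x) := by rw [smul_smul, mul_comm]
      rw [(memB x).mp hx, smul_zero] at h2'
      have := decompSum x
      rw [h2', zero_add] at this
      exact this
    have hAB : ∀ y : H, y ∈ A → y ∈ B → y = 0 := by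
      intro y hyA hyB
      have := decompSum y
      have hA0 : ((b:ℤ) * β) • y = β • ((b:ℤ) • y) := by rw [smul_smul, mul_comm]
      have hB0 : ((a:ℤ) * α) • y = α • ((a:ℤ) • y) := by rw [smul_smul, mul_comm]
      rw [hA0, hB0, (memA y).mp hyA, (memB y).mp hyB, smul_zero, smul_zero, add_zero] at this
      exact this.symm
    -- purity of S in A
    have pureA : PureSub (S.addSubgroupOf A) := by
      intro m x hx ⟨h, hmh⟩
      have hx1 : (x : H) = m • (h : H) := by rw [← hmh]; rfl
      obtain ⟨s, hsS, hs⟩ := hpure m (mem_addSubgroupOf.mp hx) ⟨(h : H), hx1.symm⟩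
      set s' : H := ((b:ℤ) * β) • s with hs'
      have hs'S : s' ∈ S := S.zsmul_mem hsS _
      have hs'A : s' ∈ A := decompA s
      have hms' : m • s' = (x : H) := by
        rw [hs', smul_comm, hs, projA _ x.2]
      exact ⟨⟨s', hs'A⟩, mem_addSubgroupOf.mpr hs'S, Subtype.ext hms'⟩
    have pureB : PureSub (S.addSubgroupOf B) := by
      intro m x hx ⟨h, hmh⟩
      have hx1 : (x : H) = m • (h : H) := by rw [← hmh]; rfl
      obtain ⟨s, hsS, hs⟩ := hpure m (mem_addSubgroupOf.mp hx) ⟨(h : H), hx1.symm⟩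
      set s' : H := ((a:ℤ) * α) • s with hs'
      have hs'S : s' ∈ S := S.zsmul_mem hsS _
      have hs'B : s' ∈ B := decompB s
      have hms' : m • s' = (x : H) := by
        rw [hs', smul_comm, hs, projB _ x.2]
      exact ⟨⟨s', hs'B⟩, mem_addSubgroupOf.mpr hs'S, Subtype.ext hms'⟩
    have bddA : ∀ h : ↥A, a • h = 0 := by
      intro h
      apply Subtype.ext
      have := (memA (h : H)).mp h.2
      rw [natCast_zsmul] at this
      simpa using this
    have bddB : ∀ h : ↥B, b • h = 0 := by
      intro h
      apply Subtype.ext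
      have := (memB (h : H)).mp h.2
      rw [natCast_zsmul] at this
      simpa using this
    obtain ⟨KA, hKA⟩ := ih a halt hapos ↥A (S.addSubgroupOf A) pureA bddA
    obtain ⟨KB, hKB⟩ := ih b hblt hbpos ↥B (S.addSubgroupOf B) pureB bddB
    refine ⟨(KA.map A.subtype) ⊔ (KB.map B.subtype), ?_, ?_⟩
    · rw [AddSubgroup.disjoint_def]
      intro x hxS hxK
      obtain ⟨k₁, hk₁, k₂, hk₂, hks⟩ := AddSubgroup.mem_sup.mp hxK
      obtain ⟨y₁, hy₁, hy₁x⟩ := hk₁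
      obtain ⟨y₂, hy₂, hy₂x⟩ := hk₂
      set u : H := ((b:ℤ) * β) • x with hu
      set w : H := ((a:ℤ) * α) • x with hw
      have huw : u + w = x := decompSum x
      have huA : u ∈ A := decompA x
      have hwB : w ∈ B := decompB x
      have huS : u ∈ S := S.zsmul_mem hxS _
      have hwS : w ∈ S := S.zsmul_mem hxS _
      have hdiff : u - k₁ = k₂ - w := by
        have h6 : u + w = k₁ + k₂ := by rw [huw, ← hks]
        have h7 : u + w - w - k₁ = k₁ + k₂ - w - k₁ := by rw [h6]
        calc u - k₁ = u + w - w - k₁ := by abel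
        _ = k₁ + k₂ - w - k₁ := h7
        _ = k₂ - w := by abel
      have hdA : u - k₁ ∈ A := A.sub_mem huA (by rw [← hy₁x]; exact y₁.2)
      have hdB : u - k₁ ∈ B := by rw [hdiff]; exact B.sub_mem (by rw [← hy₂x]; exact y₂.2) hwB
      have hd0 : u - k₁ = 0 := hAB _ hdA hdB
      have huk : u = k₁ := by rwa [sub_eq_zero] at hd0
      have hwk : w = k₂ := by
        have h5 : k₂ - w = 0 := by rw [← hdiff]; exact hd0
        exact (sub_eq_zero.mp h5).symm
      -- now u ∈ S_A ⊓ KA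
      have hu0 : u = 0 := by
        have hy₁u : y₁ = (⟨u, huA⟩ : ↥A) := Subtype.ext (by rw [← huk] at hy₁x; exact hy₁x)
        have : (⟨u, huA⟩ : ↥A) ∈ (S.addSubgroupOf A) ⊓ KA :=
          ⟨mem_addSubgroupOf.mpr huS, by rw [← hy₁u]; exact hy₁⟩
        rw [hKA.inf_eq_bot, AddSubgroup.mem_bot] at this
        exact congrArg Subtype.val this
      have hw0 : w = 0 := by
        have hy₂w : y₂ = (⟨w, hwB⟩ : ↥B) := Subtype.ext (by rw [← hwk] at hy₂x; exact hy₂x)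
        have : (⟨w, hwB⟩ : ↥B) ∈ (S.addSubgroupOf B) ⊓ KB :=
          ⟨mem_addSubgroupOf.mpr hwS, by rw [← hy₂w]; exact hy₂⟩
        rw [hKB.inf_eq_bot, AddSubgroup.mem_bot] at this
        exact congrArg Subtype.val this
      rw [← huw, hu0, hw0, add_zero]
    · rw [codisjoint_iff]
      rw [AddSubgroup.eq_top_iff']
      intro h
      set u : H := ((b:ℤ) * β) • h with hu
      set w : H := ((a:ℤ) * α) • h with hw
      have huw : u + w = h := decompSum h
      have huA : u ∈ A := decompA h
      have hwB : w ∈ B := decompB h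
      have h₁ : (⟨u, huA⟩ : ↥A) ∈ (S.addSubgroupOf A) ⊔ KA := by
        rw [hKA.sup_eq_top]; trivial
      have h₂ : (⟨w, hwB⟩ : ↥B) ∈ (S.addSubgroupOf B) ⊔ KB := by
        rw [hKB.sup_eq_top]; trivial
      obtain ⟨su, hsu, ku, hku, hsku⟩ := AddSubgroup.mem_sup.mp h₁
      obtain ⟨sw, hsw, kw, hkw, hskw⟩ := AddSubgroup.mem_sup.mp h₂
      have e1 : (su : H) + (ku : H) = u := congrArg Subtype.val hsku
      have e2 : (sw : H) + (kw : H) = w := congrArg Subtype.val hskw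
      have : h = ((su : H) + (sw : H)) + ((ku : H) + (kw : H)) := by
        rw [← huw, ← e1, ← e2]; abel
      rw [this]
      refine AddSubgroup.add_mem _ (AddSubgroup.mem_sup_left (S.add_mem (mem_addSubgroupOf.mp hsu) (mem_addSubgroupOf.mp hsw))) (AddSubgroup.mem_sup_right ?_)
      exact AddSubgroup.add_mem _ (AddSubgroup.mem_sup_left ⟨ku, hku, rfl⟩) (AddSubgroup.mem_sup_right ⟨kw, hkw, rfl⟩)

theorem bp_main (S : AddSubgroup H) (hpure : PureSub S)
    (n : ℕ) (hn : 0 < n) (hbd : ∀ x ∈ S, n • x = 0) : ∃ K : AddSubgroup H, IsCompl S K := by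
  set N : AddSubgroup H := AddSubgroup.map (DistribMulAction.toAddMonoidHom H (n:ℤ)) ⊤ with hN
  have memN : ∀ x : H, x ∈ N ↔ ∃ h : H, n • h = x := by
    intro x
    constructor
    · rintro ⟨h, -, rfl⟩
      exact ⟨h, (natCast_zsmul h n).symm⟩
    · rintro ⟨h, rfl⟩
      exact ⟨h, trivial, natCast_zsmul h n⟩
  set π : H →+ H ⧸ N := QuotientAddGroup.mk' N with hπ
  have hsurj : Function.Surjective π := QuotientAddGroup.mk'_surjective N
  have hker : ∀ x : H, π x = 0 ↔ x ∈ N := fun x => QuotientAddGroup.eq_zero_iff x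
  set Sb : AddSubgroup (H ⧸ N) := S.map π with hSb
  have hbdQ : ∀ x : H ⧸ N, n • x = 0 := by
    intro x
    obtain ⟨h, rfl⟩ := hsurj x
    rw [← map_nsmul]
    exact (hker _).mpr ((memN _).mpr ⟨h, rfl⟩)
  have pureQ : PureSub Sb := by
    intro m x hx ⟨hq, hmh⟩
    obtain ⟨s, hsS, hsx⟩ := hx
    obtain ⟨y, rfl⟩ := hsurj hq
    have hdiffN : s - m • y ∈ N := by
      rw [← hker]
      rw [map_sub, map_nsmul, hmh, hsx, sub_self]
    obtain ⟨w, hw⟩ := (memN _).mp hdiffN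
    set d : ℕ := Nat.gcd m n with hd
    have hdpos : 0 < d := Nat.gcd_pos_of_pos_right m hn
    have hsd : s = d • ((m/d) • y + (n/d) • w) := by
      rw [smul_add, ← mul_smul, ← mul_smul,
        Nat.mul_div_cancel' (Nat.gcd_dvd_left m n),
        Nat.mul_div_cancel' (Nat.gcd_dvd_right m n), hw]
      abel
    obtain ⟨s₁, hs₁S, hs₁⟩ := hpure d hsS ⟨_, hsd.symm⟩
    set γ : ℤ := Nat.gcdA m n with hγ
    set δ : ℤ := Nat.gcdB m n with hδ
    have hbez : (d:ℤ) = m * γ + n * δ := Nat.gcd_eq_gcd_ab m n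
    have hns₁ : (n:ℤ) • s₁ = 0 := by rw [natCast_zsmul]; exact hbd s₁ hs₁S
    have key : s = m • (γ • s₁) := by
      have h1 : s = (d:ℤ) • s₁ := by rw [natCast_zsmul, hs₁]
      rw [h1, hbez, add_smul, mul_smul, mul_comm (n:ℤ) δ, mul_smul, hns₁, smul_zero, add_zero,
        natCast_zsmul]
    refine ⟨π (γ • s₁), AddSubgroup.mem_map_of_mem π (S.zsmul_mem hs₁S γ), ?_⟩
    rw [← map_nsmul, ← key, hsx]
  obtain ⟨Kb, hKb⟩ := bp_bdd n hn (H ⧸ N) Sb pureQ hbdQ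
  refine ⟨Kb.comap π, ?_, ?_⟩
  · rw [AddSubgroup.disjoint_def]
    intro x hxS hxK
    have hx2 : π x ∈ Sb ⊓ Kb := ⟨AddSubgroup.mem_map_of_mem π hxS, hxK⟩
    rw [hKb.inf_eq_bot, AddSubgroup.mem_bot] at hx2
    obtain ⟨w, hw⟩ := (memN x).mp ((hker x).mp hx2)
    obtain ⟨s₁, hs₁S, hs₁⟩ := hpure n hxS ⟨w, hw⟩
    rw [← hs₁]
    exact hbd s₁ hs₁S
  · rw [codisjoint_iff, AddSubgroup.eq_top_iff']
    intro h
    have hmem : π h ∈ Sb ⊔ Kb := by rw [hKb.sup_eq_top]; trivial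
    obtain ⟨sb, hsb, kb, hkb, hsk⟩ := AddSubgroup.mem_sup.mp hmem
    obtain ⟨s, hsS, rfl⟩ := hsb
    have hπdiff : π (h - s) = kb := by rw [map_sub, ← hsk]; abel
    have hdK : h - s ∈ Kb.comap π := by
      rw [AddSubgroup.mem_comap, hπdiff]
      exact hkb
    have hdecomp : h = s + (h - s) := by abel
    rw [hdecomp]
    exact AddSubgroup.add_mem _ (AddSubgroup.mem_sup_left hsS) (AddSubgroup.mem_sup_right hdK)

end Aux

theorem stmt_7 (G : Type*) [AddCommGroup G] (T Tor : AddSubgroup G)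
    (hTor : ∀ g : G, g ∈ Tor ↔ ∃ n : ℕ, 0 < n ∧ n • g = 0)
    (hle : T ≤ Tor)
    -- T is pure in Tor(G)
    (hpure : ∀ n : ℕ, 0 < n → ∀ t ∈ T, (∃ g ∈ Tor, n • g = t) → ∃ h ∈ T, n • h = t)
    -- T is the (internal) direct sum of a divisible subgroup and a bounded one
    (hsum : ∃ D B : AddSubgroup T, IsCompl D B ∧
      (∀ x ∈ D, ∀ n : ℕ, 0 < n → ∃ y ∈ D, n • y = x) ∧
      (∃ n : ℕ, 0 < n ∧ ∀ b ∈ B, n • b = 0)) :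
    ∃ K : AddSubgroup G, IsCompl T K := by
  classical
  obtain ⟨D, B, hDB, hdiv, n, hnpos, hbdB⟩ := hsum
  have pureT : PureSub T := by
    intro m x hx ⟨h, hmh⟩
    rcases Nat.eq_zero_or_pos m with hm0 | hm
    · subst hm0
      refine ⟨0, T.zero_mem, ?_⟩
      rw [zero_nsmul] at hmh ⊢
      exact hmh
    · obtain ⟨nx, hnxpos, hnx⟩ := (hTor x).mp (hle hx)
      have hhTor : h ∈ Tor := (hTor h).mpr ⟨nx * m, by positivity,
        by rw [mul_smul, hmh]; exact hnx⟩
      obtain ⟨t, htT, ht⟩ := hpure m hm x hx ⟨h, hhTor, hmh⟩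
      exact ⟨t, htT, ht⟩
  set D' : AddSubgroup G := D.map T.subtype with hD'def
  set B' : AddSubgroup G := B.map T.subtype with hB'def
  have hD'T : D' ≤ T := by rintro x ⟨d, -, rfl⟩; exact d.2
  have hdiv' : ∀ x ∈ D', ∀ m : ℕ, 0 < m → ∃ y ∈ D', m • y = x := by
    rintro x ⟨d, hdD, rfl⟩ m hm
    obtain ⟨y, hyD, hy⟩ := hdiv d hdD m hm
    exact ⟨T.subtype y, ⟨y, hyD, rfl⟩, by rw [← map_nsmul, hy]⟩
  obtain ⟨r, hr⟩ := div_split D' hdiv'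
  set K₁ : AddSubgroup G := r.toAddMonoidHom.ker with hK₁def
  have memK₁ : ∀ x : G, x ∈ K₁ ↔ r x = 0 := fun x => Iff.rfl
  have hsub : ∀ g : G, g - (r g : G) ∈ K₁ := by
    intro g
    rw [memK₁, map_sub, hr (r g), sub_self]
  have hD'K₁ : ∀ x, x ∈ D' → x ∈ K₁ → x = 0 := by
    intro x hxD hxK
    have h1 : r x = ⟨x, hxD⟩ := hr ⟨x, hxD⟩
    rw [memK₁] at hxK
    rw [h1] at hxK
    exact congrArg Subtype.val hxK
  set S : AddSubgroup G := T ⊓ K₁ with hSdef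
  have hrT : ∀ t : G, ((r t : G)) ∈ T := fun t => hD'T (r t).2
  have hbdS : ∀ x ∈ S, n • x = 0 := by
    rintro x ⟨hxT, hxK⟩
    have hmem : (⟨x, hxT⟩ : ↥T) ∈ D ⊔ B := by rw [hDB.sup_eq_top]; trivial
    obtain ⟨dd, hdd, bb, hbb, hdb⟩ := AddSubgroup.mem_sup.mp hmem
    have hnb : n • bb = 0 := hbdB bb hbb
    have hnx : n • x = ((n • dd : ↥T) : G) := by
      have h2 : n • (⟨x, hxT⟩ : ↥T) = n • dd + n • bb := by rw [← smul_add, hdb]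
      rw [hnb, add_zero] at h2
      exact congrArg Subtype.val h2
    have hnxD : n • x ∈ D' := by
      rw [hnx]
      exact ⟨n • dd, D.nsmul_mem hdd n, rfl⟩
    have hnxK : n • x ∈ K₁ := K₁.nsmul_mem hxK n
    exact hD'K₁ _ hnxD hnxK
  set S₂ : AddSubgroup ↥K₁ := S.addSubgroupOf K₁ with hS₂def
  have pureS₂ : PureSub S₂ := by
    intro m x hx ⟨h, hmh⟩
    have hxS : (x : G) ∈ S := mem_addSubgroupOf.mp hx
    have hx1 : (x : G) = m • (h : G) := by rw [← hmh]; rfl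
    obtain ⟨t, htT, ht⟩ := pureT m hxS.1 ⟨(h : G), hx1.symm⟩
    set y : G := t - ↑(r t) with hydef
    have hyT : y ∈ T := T.sub_mem htT (hrT t)
    have hyK : y ∈ K₁ := hsub t
    have hmy : m • y = (x : G) := by
      rw [hydef, smul_sub, ht]
      have h2 : ((r ((x:G)) : ↥D') : G) = 0 := by rw [(memK₁ _).mp hxS.2]; rfl
      have h3 : m • ((r t : ↥D') : G) = ((r ((x:G)) : ↥D') : G) := by
        rw [← ht, map_nsmul]
        norm_cast
      rw [h3, h2, sub_zero]
    exact ⟨⟨y, hyK⟩, mem_addSubgroupOf.mpr ⟨hyT, hyK⟩, Subtype.ext hmy⟩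
  have hbdS₂ : ∀ x ∈ S₂, n • x = 0 := by
    intro x hx
    apply Subtype.ext
    have := hbdS _ (mem_addSubgroupOf.mp hx)
    simpa using this
  obtain ⟨K₂', hK₂'⟩ := bp_main S₂ pureS₂ n hnpos hbdS₂
  set K₂ : AddSubgroup G := K₂'.map K₁.subtype with hK₂def
  refine ⟨K₂, ?_, ?_⟩
  · rw [AddSubgroup.disjoint_def]
    intro x hxT hxK₂
    obtain ⟨y, hyK₂', hyx⟩ := hxK₂
    have hyS₂ : y ∈ S₂ := mem_addSubgroupOf.mpr ⟨by rw [← hyx] at hxT; exact hxT, y.2⟩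
    have hy2 : y ∈ S₂ ⊓ K₂' := ⟨hyS₂, hyK₂'⟩
    rw [hK₂'.inf_eq_bot, AddSubgroup.mem_bot] at hy2
    rw [← hyx, hy2]
    exact map_zero _
  · rw [codisjoint_iff, AddSubgroup.eq_top_iff']
    intro g
    set g₁ : G := g - ↑(r g) with hg₁def
    have hg₁K : g₁ ∈ K₁ := hsub g
    have hmem : (⟨g₁, hg₁K⟩ : ↥K₁) ∈ S₂ ⊔ K₂' := by rw [hK₂'.sup_eq_top]; trivial
    obtain ⟨s₂, hs₂, k₂, hk₂, hsk⟩ := AddSubgroup.mem_sup.mp hmem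
    have hv : (s₂ : G) + (k₂ : G) = g₁ := congrArg Subtype.val hsk
    have hs₂T : (s₂ : G) ∈ T := (mem_addSubgroupOf.mp hs₂).1
    have hk₂K₂ : (k₂ : G) ∈ K₂ := ⟨k₂, hk₂, rfl⟩
    have hgdec : g = ((↑(r g) : G) + (s₂ : G)) + (k₂ : G) := by
      have h5 : (s₂ : G) + (k₂ : G) = g - ↑(r g) := by rw [hg₁def] at hv; exact hv
      calc g = ↑(r g) + (g - ↑(r g)) := by abel
      _ = ↑(r g) + ((s₂ : G) + (k₂ : G)) := by rw [← h5]
      _ = (↑(r g) + (s₂ : G)) + (k₂ : G) := by abel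
    rw [hgdec]
    exact AddSubgroup.add_mem _
      (AddSubgroup.mem_sup_left (T.add_mem (hrT g) hs₂T))
      (AddSubgroup.mem_sup_right hk₂K₂)
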